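/- Let R be a proper reflective full subcategory of the category of groups. Then every subfunctor F of the identity functor on groups whose values F(G) all lie in R is trivial, i.e., F(G) = 1 for all G. -/

import Mathlib

open CategoryTheory

universe u

/-- A subfunctor of the identity functor on the category of groups. -/
structure GrpIdSubfunctor : Type (u + 1) where
  sub : ∀ G : GrpCat.{u}, Subgroup G
  map_le : ∀ {G H : GrpCat.{u}} (φ : G ⟶ H), (sub G).map φ.hom ≤ sub H

open Equiv

section Refl
variable (P : GrpCat.{u} → Prop) [Reflective (ObjectProperty.ι P)]

lemma unit_exists (H : GrpCat.{u}) :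
    ∃ (RH : GrpCat.{u}) (_ : P RH) (η : H ⟶ RH),
      ∀ (A : GrpCat.{u}), P A → ∀ φ : H ⟶ A, ∃! ψ : RH ⟶ A, η ≫ ψ = φ := by
  set i := ObjectProperty.ι P with hi
  set adj := reflectorAdjunction i
  refine ⟨i.obj ((reflector i).obj H), ((reflector i).obj H).property,
    adj.unit.app H, ?_⟩
  intro A hA φ
  let A' : ObjectProperty.FullSubcategory P := ⟨A, hA⟩
  have : (φ : H ⟶ i.obj A') = φ := rfl
  refine ⟨i.map ((adj.homEquiv H A').symm φ), ?_, ?_⟩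
  · have := adj.homEquiv_unit (X := H) (Y := A') ((adj.homEquiv H A').symm φ)
    simpa using this.symm
  · intro ψ' hψ'
    obtain ⟨ψ'', rfl⟩ := i.map_surjective (X := (reflector i).obj H) (Y := A') ψ'
    have h2 : (adj.homEquiv H A') ψ'' = φ := by
      rw [adj.homEquiv_unit]; exact hψ'
    rw [← h2]
    congr 1
    exact ((adj.homEquiv H A').symm_apply_apply ψ'').symm

/-- equalizer subgroup -/
def eqSubgroup {W Q : GrpCat.{u}} (f h : W ⟶ Q) : Subgroup W where
  carrier := {w | f w = h w}
  one_mem' := by simp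
  mul_mem' := by intro a b (ha : _ = _) (hb : _ = _); show f (a*b) = h (a*b); simp [map_mul, ha, hb]
  inv_mem' := by intro a (ha : _ = _); show f a⁻¹ = h a⁻¹; simp [ha]

lemma P_equalizer (hiso : ∀ {G H : GrpCat.{u}}, (G ≅ H) → P G → P H)
    {W Q : GrpCat.{u}} (hW : P W) (hQ : P Q) (f h : W ⟶ Q) :
    P (GrpCat.of (eqSubgroup f h)) := by
  obtain ⟨RH, hRH, η, huniv⟩ := unit_exists P (GrpCat.of (eqSubgroup f h))
  let e : GrpCat.of (eqSubgroup f h) ⟶ W := GrpCat.ofHom ((eqSubgroup f h).subtype)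
  obtain ⟨ψ, hψ, -⟩ := huniv W hW e
  have hfh : ψ ≫ f = ψ ≫ h := by
    have h1 : η ≫ (ψ ≫ f) = e ≫ f := by rw [← Category.assoc, hψ]
    have h2 : η ≫ (ψ ≫ h) = e ≫ h := by rw [← Category.assoc, hψ]
    have h3 : e ≫ f = e ≫ h := by
      ext x
      exact x.2
    obtain ⟨ψ₀, hψ₀, huniq⟩ := huniv Q hQ (e ≫ f)
    rw [huniq _ h1, huniq _ (h2.trans h3.symm)]
  let m : RH ⟶ GrpCat.of (eqSubgroup f h) :=
    GrpCat.ofHom (ψ.hom.codRestrict (eqSubgroup f h) (fun r => by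
      have := congrArg (fun (k : RH ⟶ Q) => k r) hfh
      exact this))
  have hme : m ≫ e = ψ := by ext r; rfl
  have h_unit_m : η ≫ m = 𝟙 _ := by
    ext x
    have h5 : e ((η ≫ m) x) = e x := by
      show (η ≫ m ≫ e) x = e x
      rw [hme, hψ]
    exact h5
  have h_m_unit : m ≫ η = 𝟙 RH := by
    obtain ⟨ψ₀, hψ₀, huniq⟩ := huniv RH hRH η
    have e1 : η ≫ (m ≫ η) = η := by rw [← Category.assoc, h_unit_m, Category.id_comp]
    have e2 : η ≫ 𝟙 RH = η := Category.comp_id η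
    rw [huniq _ e1, huniq _ e2]
  exact hiso (Iso.mk η m h_unit_m h_m_unit).symm hRH

end Refl

noncomputable section Perms
open scoped Classical
variable {G₀ : Type u} [Group G₀] (g : G₀)

def orep (x : G₀) : G₀ := Quotient.out (QuotientGroup.mk x : G₀ ⧸ Subgroup.zpowers g)

lemma orep_spec (x : G₀) : ∃ k : ℤ, x = orep g x * g ^ k := by
  have h : (orep g x)⁻¹ * x ∈ Subgroup.zpowers g := by
    rw [← QuotientGroup.eq]
    exact QuotientGroup.out_eq' _
  obtain ⟨k, hk⟩ := h
  refine ⟨k, ?_⟩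
  have hk' : g ^ k = (orep g x)⁻¹ * x := hk
  rw [hk']; group

lemma orep_mul_zpow (x : G₀) (k : ℤ) : orep g (x * g ^ k) = orep g x := by
  unfold orep
  congr 1
  rw [QuotientGroup.eq]
  exact ⟨-k, by simp [mul_inv_rev, mul_assoc]⟩

lemma orep_orep (x : G₀) : orep g (orep g x) = orep g x := by
  unfold orep
  rw [QuotientGroup.out_eq']

def srefl (x : G₀) : G₀ := orep g x * x⁻¹ * orep g x

lemma srefl_eq (x : G₀) : ∃ (t : G₀) (k : ℤ), orep g t = t ∧ x = t * g ^ k ∧ srefl g x = t * g ^ (-k) := by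
  obtain ⟨k, hk⟩ := orep_spec g x
  refine ⟨orep g x, k, orep_orep g x, hk, ?_⟩
  unfold srefl
  rw [hk, orep_mul_zpow, orep_orep]
  group

lemma srefl_mul_g (x : G₀) : srefl g (x * g) = srefl g x * g⁻¹ := by
  obtain ⟨t, k, ht, hx, hs⟩ := srefl_eq g x
  have h2 : x * g = t * g ^ (k + 1) := by rw [hx]; group
  obtain ⟨t', k', ht', hx', hs'⟩ := srefl_eq g (x * g)
  rw [h2] at hx'
  have htt : t' = t := by
    have h3 : orep g (t * g ^ (k+1)) = orep g (t' * g ^ k') := by rw [← hx']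
    rw [orep_mul_zpow, orep_mul_zpow, ht, ht'] at h3
    exact h3.symm
  rw [htt] at hx'
  have hkk : g ^ (k+1) = g ^ k' := mul_left_cancel hx'
  rw [hs', hs, htt, zpow_neg, zpow_neg, ← hkk]
  group

lemma srefl_srefl (x : G₀) : srefl g (srefl g x) = x := by
  obtain ⟨t, k, ht, hx, hs⟩ := srefl_eq g x
  rw [hs]
  unfold srefl
  rw [orep_mul_zpow, ht, hx]
  group

lemma srefl_eq_iff (a b : G₀) : srefl g a = b ↔ a = srefl g b := by
  constructor
  · rintro rfl; rw [srefl_srefl]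
  · rintro rfl; rw [srefl_srefl]

variable {Z : Type u}

/-- the conjugating permutation for the brick construction -/
def brickW (π : Perm Z) : Perm (Z × G₀) where
  toFun x := (if x.2 = srefl g 1 then π⁻¹ x.1 else x.1, srefl g x.2)
  invFun x := (if x.2 = 1 then π x.1 else x.1, srefl g x.2)
  left_inv x := by
    obtain ⟨z, c⟩ := x
    by_cases h : c = srefl g 1
    · have h2 : srefl g c = 1 := (srefl_eq_iff g c 1).mpr h
      simp [h, h2, srefl_srefl]
    · have h2 : ¬ (srefl g c = 1) := fun hh => h ((srefl_eq_iff g c 1).mp hh)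
      simp [h, h2, srefl_srefl]
  right_inv x := by
    obtain ⟨z, c⟩ := x
    by_cases h : c = 1
    · have h2 : srefl g c = srefl g 1 := by rw [h]
      simp [h, h2, srefl_srefl]
    · have h2 : ¬ (srefl g c = srefl g 1) := by
        intro hh
        exact h (by rw [(srefl_eq_iff g c (srefl g 1)).mp hh, srefl_srefl])
      simp [h, h2, srefl_srefl]

/-- right multiplication homomorphism -/
def rmulHom : G₀ →* Perm (Z × G₀) where
  toFun a := Equiv.prodCongr (Equiv.refl Z) (Equiv.mulRight a⁻¹)
  map_one' := by apply Equiv.ext; rintro ⟨z, c⟩; simp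
  map_mul' a b := by apply Equiv.ext; rintro ⟨z, c⟩; simp [mul_assoc]

def uperm : Perm (Z × G₀) := Equiv.prodCongr (Equiv.refl Z) (Equiv.mulRight g)

lemma uperm_eq : (uperm g : Perm (Z × G₀)) = ((rmulHom : G₀ →* Perm (Z × G₀)) g)⁻¹ := by
  have : ((rmulHom : G₀ →* Perm (Z × G₀)) g)⁻¹ = ((rmulHom : G₀ →* Perm (Z × G₀)) g).symm := rfl
  rw [this]
  apply Equiv.ext; rintro ⟨z, c⟩
  simp [uperm, rmulHom, Equiv.prodCongr_symm]

lemma brick_apply (hg1 : g ≠ 1) (π : Perm Z) (z : Z) (c : G₀) :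
    ((uperm g * brickW g π * uperm g * (brickW g π)⁻¹ : Perm (Z × G₀))) (z, c)
      = (if c = 1 then π z else if c = g then π⁻¹ z else z, c) := by
  have e1 : ((brickW g π)⁻¹ : Perm (Z × G₀)) (z, c) = (if c = 1 then π z else z, srefl g c) := rfl
  rw [Equiv.Perm.mul_apply, Equiv.Perm.mul_apply, Equiv.Perm.mul_apply, e1]
  have e2 : (uperm g : Perm (Z × G₀)) ((if c = 1 then π z else z : Z), srefl g c)
      = (if c = 1 then π z else z, srefl g c * g) := rfl
  rw [e2]
  have key : srefl g (c * g⁻¹) = srefl g c * g := by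
    have h9 := srefl_mul_g g (c * g⁻¹)
    rw [inv_mul_cancel_right] at h9
    rw [h9]; group
  have hcond : (srefl g c * g = srefl g 1) ↔ c = g := by
    rw [← key]
    constructor
    · intro hh
      have := (srefl_eq_iff g _ _).mp hh
      rw [srefl_srefl] at this
      rw [← mul_inv_cancel_right c g⁻¹, this]; group
    · rintro rfl; rw [mul_inv_cancel]
  have e3 : (brickW g π) ((if c = 1 then π z else z : Z), srefl g c * g)
      = (if srefl g c * g = srefl g 1 then π⁻¹ (if c = 1 then π z else z) else (if c = 1 then π z else z),
         srefl g (srefl g c * g)) := rfl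
  rw [e3, srefl_mul_g, srefl_srefl]
  have e4 : ∀ w : Z, (uperm g : Perm (Z × G₀)) (w, c * g⁻¹) = (w, c * g⁻¹ * g) := fun _ => rfl
  rw [e4]
  have e5 : c * g⁻¹ * g = c := by group
  rw [e5]
  by_cases h1 : c = 1
  · have h2 : ¬ (srefl g c * g = srefl g 1) := by rw [hcond, h1]; exact fun hh => hg1 hh.symm
    subst h1
    rw [if_neg h2, if_pos rfl, if_pos rfl]
  · by_cases h3 : c = g
    · have h4 : srefl g c * g = srefl g 1 := by rw [hcond]; exact h3
      subst h3
      rw [if_pos h4, if_neg h1, if_neg h1, if_pos rfl]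
    · have h4 : ¬ (srefl g c * g = srefl g 1) := by rw [hcond]; exact h3
      rw [if_neg h4, if_neg h1, if_neg h1, if_neg h3]

section Assembly
variable {M : Type u}

/-- act by `p` on all indices `i ≥ 0` -/
def pi1 (p : Perm M) : Perm (M × ℤ) where
  toFun x := if 0 ≤ x.2 then (p x.1, x.2) else x
  invFun x := if 0 ≤ x.2 then (p⁻¹ x.1, x.2) else x
  left_inv x := by obtain ⟨m, i⟩ := x; by_cases h : 0 ≤ i <;> simp [h]
  right_inv x := by obtain ⟨m, i⟩ := x; by_cases h : 0 ≤ i <;> simp [h]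

lemma pi1_apply (p : Perm M) (m : M) (i : ℤ) :
    pi1 p (m, i) = if 0 ≤ i then (p m, i) else (m, i) := rfl

lemma pi1_inv (p : Perm M) : (pi1 p)⁻¹ = pi1 p⁻¹ := by
  apply Equiv.ext; intro x
  rw [Equiv.Perm.inv_def, Equiv.symm_apply_eq]
  obtain ⟨m, i⟩ := x
  by_cases h : 0 ≤ i <;> simp [pi1, h]

/-- swap the `1` and `g` rows on columns `i ≥ 0` -/
def W1 : Perm ((M × ℤ) × G₀) where
  toFun x := (x.1, if 0 ≤ x.1.2 then (Equiv.swap (1 : G₀) g) x.2 else x.2)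
  invFun x := (x.1, if 0 ≤ x.1.2 then (Equiv.swap (1 : G₀) g) x.2 else x.2)
  left_inv x := by obtain ⟨⟨m, i⟩, c⟩ := x; by_cases h : 0 ≤ i <;> simp [h]
  right_inv x := by obtain ⟨⟨m, i⟩, c⟩ := x; by_cases h : 0 ≤ i <;> simp [h]

lemma W1_apply (m : M) (i : ℤ) (c : G₀) :
    W1 g ((m, i), c) = ((m, i), if 0 ≤ i then (Equiv.swap (1 : G₀) g) c else c) := rfl

lemma W1_inv_apply (m : M) (i : ℤ) (c : G₀) :
    (W1 g)⁻¹ ((m, i), c) = ((m, i), if 0 ≤ i then (Equiv.swap (1 : G₀) g) c else c) := rfl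

/-- shift the `g`-row by one -/
def W2 : Perm ((M × ℤ) × G₀) where
  toFun x := ((x.1.1, if x.2 = g then x.1.2 + 1 else x.1.2), x.2)
  invFun x := ((x.1.1, if x.2 = g then x.1.2 - 1 else x.1.2), x.2)
  left_inv x := by obtain ⟨⟨m, i⟩, c⟩ := x; by_cases h : c = g <;> simp [h]
  right_inv x := by obtain ⟨⟨m, i⟩, c⟩ := x; by_cases h : c = g <;> simp [h]

lemma W2_apply (m : M) (i : ℤ) (c : G₀) :
    W2 g ((m, i), c) = ((m, if c = g then i + 1 else i), c) := rfl

lemma W2_inv_apply (m : M) (i : ℤ) (c : G₀) :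
    (W2 g)⁻¹ ((m, i), c) = ((m, if c = g then i - 1 else i), c) := rfl

/-- embed a permutation of `M` at the single cell (row `g`, column `0`) -/
def iotaPerm (p : Perm M) : Perm ((M × ℤ) × G₀) where
  toFun x := ((if x.2 = g ∧ x.1.2 = 0 then p x.1.1 else x.1.1, x.1.2), x.2)
  invFun x := ((if x.2 = g ∧ x.1.2 = 0 then p⁻¹ x.1.1 else x.1.1, x.1.2), x.2)
  left_inv x := by obtain ⟨⟨m, i⟩, c⟩ := x; by_cases h : c = g ∧ i = 0 <;> simp [h]
  right_inv x := by obtain ⟨⟨m, i⟩, c⟩ := x; by_cases h : c = g ∧ i = 0 <;> simp [h]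

lemma iotaPerm_apply (p : Perm M) (m : M) (i : ℤ) (c : G₀) :
    iotaPerm g p ((m, i), c) = ((if c = g ∧ i = 0 then p m else m, i), c) := rfl

def brickOf (p : Perm M) : Perm ((M × ℤ) × G₀) :=
  uperm g * brickW g (pi1 p) * uperm g * (brickW g (pi1 p))⁻¹

def Mel (p : Perm M) : Perm ((M × ℤ) × G₀) := W1 g * brickOf g p * (W1 g)⁻¹

def Mel2 (p : Perm M) : Perm ((M × ℤ) × G₀) := W2 g * Mel g p * (W2 g)⁻¹

lemma Mel_apply (hg1 : g ≠ 1) (p : Perm M) (m : M) (i : ℤ) (c : G₀) :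
    Mel g p ((m, i), c)
      = ((if 0 ≤ i ∧ c = g then p m else if 0 ≤ i ∧ c = 1 then p⁻¹ m else m, i), c) := by
  unfold Mel
  rw [Equiv.Perm.mul_apply, Equiv.Perm.mul_apply, W1_inv_apply]
  by_cases h : 0 ≤ i
  · rw [if_pos h]
    unfold brickOf
    rw [brick_apply g hg1]
    by_cases h1 : c = g
    · subst h1
      rw [Equiv.swap_apply_right]
      rw [if_pos rfl, pi1_apply, if_pos h, W1_apply, if_pos h, Equiv.swap_apply_left]
      simp [h, hg1]
    · by_cases h2 : c = 1
      · subst h2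
        rw [Equiv.swap_apply_left]
        rw [if_neg hg1, if_pos rfl, pi1_inv, pi1_apply, if_pos h, W1_apply, if_pos h,
          Equiv.swap_apply_right]
        simp [h, h1]
      · rw [Equiv.swap_apply_of_ne_of_ne h2 h1, if_neg h2, if_neg h1, W1_apply, if_pos h,
          Equiv.swap_apply_of_ne_of_ne h2 h1]
        simp [h1, h2]
  · rw [if_neg h]
    unfold brickOf
    rw [brick_apply g hg1]
    have hp : pi1 p (m, i) = (m, i) := by rw [pi1_apply, if_neg h]
    have hp' : (pi1 p)⁻¹ (m, i) = (m, i) := by rw [pi1_inv, pi1_apply, if_neg h]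
    by_cases h1 : c = 1
    · rw [if_pos h1, hp, W1_apply, if_neg h]
      simp [h]
    · by_cases h2 : c = g
      · rw [if_neg h1, if_pos h2, hp', W1_apply, if_neg h]
        simp [h]
      · rw [if_neg h1, if_neg h2, W1_apply, if_neg h]
        simp [h]

lemma Mel2_apply (hg1 : g ≠ 1) (p : Perm M) (m : M) (i : ℤ) (c : G₀) :
    Mel2 g p ((m, i), c)
      = ((if 1 ≤ i ∧ c = g then p m else if 0 ≤ i ∧ c = 1 then p⁻¹ m else m, i), c) := by
  unfold Mel2
  rw [Equiv.Perm.mul_apply, Equiv.Perm.mul_apply, W2_inv_apply]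
  by_cases hc : c = g <;> by_cases hc1 : c = 1
  · exact absurd (by rw [← hc]; exact hc1) hg1
  · rw [if_pos hc, Mel_apply g hg1, W2_apply, if_pos hc]
    simp only [show ((0:ℤ) ≤ i - 1) ↔ (1 ≤ i) from by omega, show i - 1 + 1 = i from by omega]
    simp [hc, hc1, hg1, Ne.symm hg1]
  · rw [if_neg hc, Mel_apply g hg1, W2_apply, if_neg hc]
    simp [hc, hc1, hg1, Ne.symm hg1]
  · rw [if_neg hc, Mel_apply g hg1, W2_apply, if_neg hc]
    simp [hc, hc1, hg1, Ne.symm hg1]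

lemma iota_decomp (hg1 : g ≠ 1) (p : Perm M) :
    iotaPerm g p = (Mel2 g p)⁻¹ * Mel g p := by
  have key : Mel2 g p * iotaPerm g p = Mel g p := by
    apply Equiv.ext
    rintro ⟨⟨m, i⟩, c⟩
    rw [Equiv.Perm.mul_apply, iotaPerm_apply, Mel2_apply g hg1, Mel_apply g hg1]
    by_cases hc : c = g <;> by_cases hc1 : c = 1
    · exact absurd (by rw [← hc]; exact hc1) hg1
    · rcases lt_trichotomy i 0 with hi | hi | hi
      · have A : ¬ (0:ℤ) ≤ i := by omega
        have B : ¬ (1:ℤ) ≤ i := by omega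
        have C : ¬ i = 0 := by omega
        simp [hc, hc1, A, B, C, hg1, Ne.symm hg1]
      · simp [hc, hc1, hi, hg1, Ne.symm hg1]
      · have A : (0:ℤ) ≤ i := by omega
        have B : (1:ℤ) ≤ i := by omega
        have C : ¬ i = 0 := by omega
        simp [hc, hc1, A, B, C, hg1, Ne.symm hg1]
    · simp [hc, hc1, hg1, Ne.symm hg1]
    · simp [hc, hc1, hg1, Ne.symm hg1]
  calc iotaPerm g p = (Mel2 g p)⁻¹ * (Mel2 g p * iotaPerm g p) := by group
    _ = (Mel2 g p)⁻¹ * Mel g p := by rw [key]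

end Assembly

section IotaHom
variable {M : Type u}

/-- `iotaPerm` as a group homomorphism -/
def iotaHom (g : G₀) : Perm M →* Perm ((M × ℤ) × G₀) where
  toFun p := iotaPerm g p
  map_one' := by
    apply Equiv.ext
    rintro ⟨⟨m, i⟩, c⟩
    rw [iotaPerm_apply]
    by_cases h : c = g ∧ i = 0 <;> simp [h]
  map_mul' p q := by
    apply Equiv.ext
    rintro ⟨⟨m, i⟩, c⟩
    rw [Equiv.Perm.mul_apply, iotaPerm_apply, iotaPerm_apply, iotaPerm_apply]
    by_cases h : c = g ∧ i = 0 <;> simp [h]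

lemma iotaHom_injective (g : G₀) : Function.Injective (iotaHom (M := M) g) := by
  intro p q hpq
  apply Equiv.ext
  intro m
  have := congrArg (fun (σ : Perm ((M × ℤ) × G₀)) => σ ((m, 0), g)) hpq
  simp only [iotaHom, MonoidHom.coe_mk, OneHom.coe_mk, iotaPerm_apply] at this
  simpa using this

end IotaHom
end Perms

section Memb

lemma mem_Fsub_map (F : GrpIdSubfunctor.{u}) {A B : GrpCat.{u}} (φ : A ⟶ B) {x : A}
    (hx : x ∈ F.sub A) : φ x ∈ F.sub B :=
  F.map_le φ (Subgroup.mem_map_of_mem _ hx)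

lemma conj_mem_Fsub (F : GrpIdSubfunctor.{u}) {K : GrpCat.{u}} {x : K}
    (hx : x ∈ F.sub K) (w : K) : w * x * w⁻¹ ∈ F.sub K := by
  have := mem_Fsub_map F (GrpCat.ofHom (MulAut.conj w).toMonoidHom) hx
  simpa [MulAut.conj] using this

variable (F : GrpIdSubfunctor.{u}) (G₀grp : GrpCat.{u}) (g : G₀grp)

lemma iota_mem (hg : g ∈ F.sub G₀grp) (hg1 : g ≠ 1) (M : Type u) (p : Perm M) :
    iotaPerm g p ∈ F.sub (GrpCat.of (Perm ((M × ℤ) × ↥G₀grp))) := by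
  set K : GrpCat.{u} := GrpCat.of (Perm ((M × ℤ) × ↥G₀grp)) with hK
  have hu : uperm (Z := M × ℤ) g ∈ F.sub K := by
    have h1 : (rmulHom (Z := M × ℤ) : ↥G₀grp →* Perm ((M × ℤ) × ↥G₀grp)) g ∈ F.sub K :=
      mem_Fsub_map F (GrpCat.ofHom (rmulHom (Z := M × ℤ))) hg
    have h2 := (F.sub K).inv_mem h1
    rwa [← uperm_eq] at h2
  have hb : brickOf g p ∈ F.sub K := by
    have h3 : brickOf g p = uperm g *
        (brickW g (pi1 p) * uperm g * (brickW g (pi1 p))⁻¹) := by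
      unfold brickOf; group
    rw [h3]
    exact (F.sub K).mul_mem hu (conj_mem_Fsub F hu (brickW g (pi1 p)))
  have hM : Mel g p ∈ F.sub K := conj_mem_Fsub F hb (W1 g)
  have hM2 : Mel2 g p ∈ F.sub K := conj_mem_Fsub F hM (W2 g)
  rw [iota_decomp g hg1 p]
  exact (F.sub K).mul_mem ((F.sub K).inv_mem hM2) hM
end Memb

noncomputable section Coset
open Equiv
open scoped Classical

variable {W : Type u} [Group W] (H1 : Subgroup W)

abbrev cosetX : Type u := (W ⧸ H1) ⊕ PUnit.{u+1}

def cosetF : W →* Perm (cosetX H1) :=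
  (Equiv.Perm.sumCongrHom _ _).comp ((MulAction.toPermHom W (W ⧸ H1)).prod 1)

def cosetTau : Perm (cosetX H1) :=
  Equiv.swap (Sum.inl (QuotientGroup.mk 1)) (Sum.inr PUnit.unit)

def cosetG : W →* Perm (cosetX H1) :=
  (MulAut.conj (cosetTau H1)).toMonoidHom.comp (cosetF H1)

lemma cosetF_apply_inl (w : W) (q : W ⧸ H1) :
    cosetF H1 w (Sum.inl q) = Sum.inl (w • q) := by
  simp [cosetF, Equiv.Perm.sumCongrHom]

lemma cosetF_apply_inr (w : W) :
    cosetF H1 w (Sum.inr PUnit.unit) = Sum.inr PUnit.unit := by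
  simp [cosetF, Equiv.Perm.sumCongrHom]

lemma cosetTau_inv : (cosetTau H1)⁻¹ = cosetTau H1 := by
  unfold cosetTau
  rw [Equiv.Perm.inv_def, Equiv.symm_swap]

lemma cosetTau_inr : cosetTau H1 (Sum.inr PUnit.unit) = Sum.inl (QuotientGroup.mk 1) := by
  unfold cosetTau; rw [Equiv.swap_apply_right]

lemma cosetTau_one : cosetTau H1 (Sum.inl (QuotientGroup.mk 1)) = Sum.inr PUnit.unit := by
  unfold cosetTau; rw [Equiv.swap_apply_left]

lemma cosetTau_tau (y : cosetX H1) : cosetTau H1 (cosetTau H1 y) = y := by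
  unfold cosetTau
  exact Equiv.swap_apply_self _ _ _

lemma cosetTau_other (q : W ⧸ H1) (hq : q ≠ QuotientGroup.mk 1) :
    cosetTau H1 (Sum.inl q) = Sum.inl q := by
  unfold cosetTau
  exact Equiv.swap_apply_of_ne_of_ne (fun hc => hq (Sum.inl.inj hc)) (fun hc => Sum.inl_ne_inr hc)

lemma smul_mk_one (w : W) : (w • (QuotientGroup.mk 1 : W ⧸ H1)) = QuotientGroup.mk w := by
  rw [MulAction.Quotient.smul_mk, smul_eq_mul, mul_one]

lemma cosetG_apply (w : W) (x : cosetX H1) :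
    cosetG H1 w x = cosetTau H1 (cosetF H1 w ((cosetTau H1)⁻¹ x)) := rfl

lemma coset_eq_iff (w : W) : cosetF H1 w = cosetG H1 w ↔ w ∈ H1 := by
  constructor
  · intro hEq
    have h1 := congrArg (fun σ : Perm (cosetX H1) => σ (Sum.inr PUnit.unit)) hEq
    rw [cosetF_apply_inr, cosetG_apply, cosetTau_inv] at h1
    rw [cosetTau_inr, cosetF_apply_inl, smul_mk_one] at h1
    by_contra hw
    have h3 : (QuotientGroup.mk w : W ⧸ H1) ≠ QuotientGroup.mk 1 := by
      intro hc
      rw [QuotientGroup.eq] at hc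
      simp at hc
      exact hw hc
    rw [cosetTau_other H1 _ h3] at h1
    exact Sum.inl_ne_inr h1.symm
  · intro hw
    have hmkw : (QuotientGroup.mk w : W ⧸ H1) = QuotientGroup.mk 1 := by
      rw [QuotientGroup.eq]
      simpa using inv_mem hw
    apply Equiv.ext
    intro x
    have hcomm : ∀ y, cosetF H1 w (cosetTau H1 y) = cosetTau H1 (cosetF H1 w y) := by
      intro y
      match y with
      | Sum.inr PUnit.unit =>
        rw [cosetF_apply_inr, cosetTau_inr, cosetF_apply_inl, smul_mk_one, hmkw]
      | Sum.inl q =>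
        by_cases hq : q = QuotientGroup.mk 1
        · subst hq
          rw [cosetTau_one, cosetF_apply_inr, cosetF_apply_inl, smul_mk_one, hmkw, cosetTau_one]
        · have hwq : w • q ≠ QuotientGroup.mk 1 := by
            intro hc
            obtain ⟨a, rfl⟩ := QuotientGroup.mk_surjective q
            rw [MulAction.Quotient.smul_mk, smul_eq_mul, QuotientGroup.eq] at hc
            simp only [mul_one, mul_inv_rev] at hc
            apply hq
            rw [QuotientGroup.eq]
            have h6 : a⁻¹ * w⁻¹ * w ∈ H1 := H1.mul_mem hc hw
            simpa using h6
          rw [cosetTau_other H1 _ hq, cosetF_apply_inl, cosetTau_other H1 _ hwq]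
    rw [cosetG_apply, cosetTau_inv, hcomm, cosetTau_tau]
end Coset

noncomputable section Final
open Equiv
variable (P : GrpCat.{u} → Prop) [Reflective (ObjectProperty.ι P)]

lemma P_all (hiso : ∀ {G H : GrpCat.{u}}, (G ≅ H) → P G → P H)
    (F : GrpIdSubfunctor.{u})
    (hval : ∀ G : GrpCat.{u}, P (GrpCat.of (F.sub G)))
    (G₀grp : GrpCat.{u}) (g : G₀grp) (hg : g ∈ F.sub G₀grp) (hg1 : g ≠ 1)
    (Hgrp : GrpCat.{u}) : P Hgrp := by
  -- the ambient symmetric group over `Hgrp`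
  set M : Type u := ↥Hgrp with hM
  set K1 : GrpCat.{u} := GrpCat.of (Perm ((M × ℤ) × ↥G₀grp)) with hK1
  set Wg : GrpCat.{u} := GrpCat.of ↥(F.sub K1) with hWgdef
  have hWg : P Wg := hval K1
  -- Cayley embedding of Hgrp into the subgroup F.sub K1
  let cay : ↥Hgrp →* Perm M := MulAction.toPermHom ↥Hgrp M
  have hcay_inj : Function.Injective cay := by
    intro a b hab
    have h1 := congrArg (fun σ : Perm M => σ (1 : ↥Hgrp)) hab
    simpa [cay, MulAction.toPermHom_apply] using h1
  let j0 : ↥Hgrp →* Perm ((M × ℤ) × ↥G₀grp) := (iotaHom g).comp cay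
  let j : ↥Hgrp →* ↥(F.sub K1) :=
    j0.codRestrict (F.sub K1) (fun h => iota_mem F G₀grp g hg hg1 M (cay h))
  have hj_inj : Function.Injective j := by
    intro a b hab
    apply hcay_inj
    apply iotaHom_injective g
    exact Subtype.ext_iff.mp hab
  set H1 : Subgroup ↥(F.sub K1) := j.range with hH1
  -- coset construction target
  set X : Type u := cosetX H1 with hX
  set K2 : GrpCat.{u} := GrpCat.of (Perm ((X × ℤ) × ↥G₀grp)) with hK2
  set Qg : GrpCat.{u} := GrpCat.of ↥(F.sub K2) with hQgdef
  have hQg : P Qg := hval K2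
  let pad : Perm X →* Perm ((X × ℤ) × ↥G₀grp) := iotaHom g
  let f1 : ↥(F.sub K1) →* ↥(F.sub K2) :=
    (pad.comp (cosetF H1)).codRestrict (F.sub K2)
      (fun w => iota_mem F G₀grp g hg hg1 X (cosetF H1 w))
  let h1 : ↥(F.sub K1) →* ↥(F.sub K2) :=
    (pad.comp (cosetG H1)).codRestrict (F.sub K2)
      (fun w => iota_mem F G₀grp g hg hg1 X (cosetG H1 w))
  let fgrp : Wg ⟶ Qg := GrpCat.ofHom f1
  let hgrp : Wg ⟶ Qg := GrpCat.ofHom h1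
  have hEsub : eqSubgroup fgrp hgrp = H1 := by
    apply Subgroup.ext
    intro w
    constructor
    · intro hw
      have h2 : f1 w = h1 w := hw
      have h3 : pad (cosetF H1 w) = pad (cosetG H1 w) := Subtype.ext_iff.mp h2
      have h4 : cosetF H1 w = cosetG H1 w := iotaHom_injective g h3
      exact (coset_eq_iff H1 w).mp h4
    · intro hw
      have h4 : cosetF H1 w = cosetG H1 w := (coset_eq_iff H1 w).mpr hw
      show f1 w = h1 w
      apply Subtype.ext
      show pad (cosetF H1 w) = pad (cosetG H1 w)
      rw [h4]
  have hPeq : P (GrpCat.of (eqSubgroup fgrp hgrp)) := P_equalizer P hiso hWg hQg fgrp hgrp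
  have e1 : ↥Hgrp ≃* ↥H1 := MonoidHom.ofInjective hj_inj
  have e2 : ↥Hgrp ≃* ↥(eqSubgroup fgrp hgrp) :=
    e1.trans (MulEquiv.subgroupCongr hEsub.symm)
  have iso : Hgrp ≅ GrpCat.of (eqSubgroup fgrp hgrp) := by
    refine ⟨GrpCat.ofHom e2.toMonoidHom, GrpCat.ofHom e2.symm.toMonoidHom, ?_, ?_⟩
    · ext x
      exact e2.symm_apply_apply x
    · ext x : 2
      exact e2.apply_symm_apply x
  exact hiso iso.symm hPeq
end Final

theorem stmt_17 (P : GrpCat.{u} → Prop)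
    [Reflective (ObjectProperty.ι P)]
    (hiso : ∀ {G H : GrpCat.{u}}, (G ≅ H) → P G → P H)
    (hproper : ∃ G : GrpCat.{u}, ¬ P G)
    (F : GrpIdSubfunctor.{u})
    (hval : ∀ G : GrpCat.{u}, P (GrpCat.of (F.sub G))) :
    ∀ G : GrpCat.{u}, F.sub G = ⊥ := by
  intro G
  by_contra hne
  have hgex : ∃ g ∈ F.sub G, g ≠ 1 := by
    by_contra hcon
    push_neg at hcon
    exact hne ((Subgroup.eq_bot_iff_forall _).mpr hcon)
  obtain ⟨g, hg, hg1⟩ := hgex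
  obtain ⟨B, hB⟩ := hproper
  exact hB (P_all P hiso F hval G g hg hg1 B)
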